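/- arXiv:2510.09270 — 2 statements merged into one kernel-verified Lean document; each statement's English description precedes it below -/
import Mathlib

section
/- Let 0 < a < b, let μ ∈ P_G, and assume that μ has a density with respect to Lebesgue measure on [0,1]^d which is D-Lipschitz and takes values in the interval [a, b]. Then μ satisfies the TV-Lipschitz kernel assumption with constant L = D/a + b/a². -/
open MeasureTheory Finset
open scoped ENNReal NNReal

noncomputable section

abbrev I01 : Type := unitInterval

def half : I01 := ⟨1 / 2, by norm_num⟩

/-- Index of the dyadic cell of side length `2^{-η}` containing `t ∈ [0,1]`. -/
def cIdx (η : ℕ) (t : I01) : ℕ := min ⌊(t : ℝ) * 2 ^ η⌋₊ (2 ^ η - 1)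

lemma cIdx_le_real (η : ℕ) (t : I01) : (cIdx η t : ℝ) ≤ 2 ^ η - 1 := by
  have h : cIdx η t ≤ 2 ^ η - 1 := min_le_right _ _
  have h1 : (1 : ℕ) ≤ 2 ^ η := Nat.one_le_two_pow
  calc (cIdx η t : ℝ) ≤ ((2 ^ η - 1 : ℕ) : ℝ) := by exact_mod_cast h
    _ = 2 ^ η - 1 := by rw [Nat.cast_sub h1]; push_cast; ring

/-- Midpoint of the dyadic cell of side length `2^{-η}` containing `t`. -/
def cMid (η : ℕ) (t : I01) : I01 :=
  ⟨((cIdx η t : ℝ) + 1 / 2) / 2 ^ η, by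
    constructor
    · positivity
    · rw [div_le_one (by positivity)]
      have := cIdx_le_real η t
      linarith⟩

/-- Order-1 Wasserstein distance (w.r.t. the given metric, infimum over couplings). -/
def Wass {α : Type*} [MeasurableSpace α] [PseudoMetricSpace α] (μ ν : Measure α) : ℝ :=
  sInf {r | ∃ π : Measure (α × α), π.map Prod.fst = μ ∧ π.map Prod.snd = ν ∧
    r = ∫ p, dist p.1 p.2 ∂π}

/-- Total variation distance, `sup { ∫ f dμ - ∫ f dν : f measurable, |f| ≤ 1/2 }`. -/
def TVDist {α : Type*} [MeasurableSpace α] (μ ν : Measure α) : ℝ :=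
  sSup {r | ∃ f : α → ℝ, Measurable f ∧ (∀ x, |f x| ≤ 1 / 2) ∧
    r = (∫ x, f x ∂μ) - ∫ x, f x ∂ν}

/-- Total variation norm of a signed measure, `sup { ∫ f dν : |f| ≤ 1/2 } = |ν|(univ)/2`. -/
def tvNorm {α : Type*} [MeasurableSpace α] (s : SignedMeasure α) : ℝ :=
  (s.totalVariation Set.univ).toReal / 2

/-- `m` conditioned on `s` (normalized restriction), Dirac at `x₀` if `m s = 0`. -/
def condOn {α : Type*} [MeasurableSpace α] (m : Measure α) (s : Set α) (x₀ : α) : Measure α :=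
  if m s = 0 then Measure.dirac x₀ else (m s)⁻¹ • m.restrict s

/-- Empirical measure of the sample `ω`. -/
def empOf {α : Type*} [MeasurableSpace α] (n : ℕ) (ω : Fin n → α) : Measure α :=
  (n : ℝ≥0∞)⁻¹ • ∑ i : Fin n, Measure.dirac (ω i)

/-- Law of `n` i.i.d. samples from `μ`. -/
def iid {α : Type*} [MeasurableSpace α] (n : ℕ) (μ : Measure α) : Measure (Fin n → α) :=
  Measure.pi fun _ => μ

section Graphical

variable {K : ℕ}

abbrev Coord (d : Fin K → ℕ) (k : Fin K) : Type := Fin (d k) → I01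
abbrev Pt (d : Fin K → ℕ) : Type := ∀ k : Fin K, Coord d k
abbrev PtOn (d : Fin K → ℕ) (I : Finset (Fin K)) : Type := ∀ j : I, Coord d j.1

def projOn (d : Fin K → ℕ) (I : Finset (Fin K)) (x : Pt d) : PtOn d I := fun j => x j.1

def restrOn (d : Fin K → ℕ) {I J : Finset (Fin K)} (h : I ⊆ J) (y : PtOn d J) : PtOn d I :=
  fun j => y ⟨j.1, h j.2⟩

def basePt (d : Fin K → ℕ) : Pt d := fun _ _ => half

/-- The cell of the partition of `X_I` into cubes of side length `2^{-η}` containing `x`. -/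
def cellOn (d : Fin K → ℕ) (η : ℕ) (I : Finset (Fin K)) (x : PtOn d I) : Set (PtOn d I) :=
  {y | ∀ j i, cIdx η (y j i) = cIdx η (x j i)}

/-- The cylinder over the cell of `A_I` containing the coordinates `x_I` of `x`. -/
def cylOf (d : Fin K → ℕ) (η : ℕ) (I : Finset (Fin K)) (x : Pt d) : Set (Pt d) :=
  {y | ∀ j ∈ I, ∀ i, cIdx η (y j i) = cIdx η (x j i)}

def midPtOn (d : Fin K → ℕ) (η : ℕ) (I : Finset (Fin K)) (x : PtOn d I) : PtOn d I :=
  fun j i => cMid η (x j i)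

def midPt (d : Fin K → ℕ) (η : ℕ) (x : Pt d) : Pt d := fun k i => cMid η (x k i)

/-- The DAG (given by its parent map) is topologically sorted. -/
def SortedGraph (pa : Fin K → Finset (Fin K)) : Prop := ∀ k, ∀ j ∈ pa k, j < k

/-- A set of nodes is fully connected (any two of its nodes are joined by an edge). -/
def FullConn (pa : Fin K → Finset (Fin K)) (I : Finset (Fin K)) : Prop :=
  ∀ i ∈ I, ∀ j ∈ I, i < j → i ∈ pa j

/-- The graph has no colliders: every parent set is fully connected. -/
def NoColliders (pa : Fin K → Finset (Fin K)) : Prop := ∀ k, FullConn pa (pa k)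

def below (k : Fin K) : Finset (Fin K) := Finset.univ.filter fun j => j < k
def uptoI (k : Fin K) : Finset (Fin K) := Finset.univ.filter fun j => j ≤ k
def preOf (pa : Fin K → Finset (Fin K)) (k : Fin K) : Finset (Fin K) := uptoI k \ pa k

def dpa (d : Fin K → ℕ) (pa : Fin K → Finset (Fin K)) (k : Fin K) : ℕ := ∑ j ∈ pa k, d j

def dloc (d : Fin K → ℕ) (pa : Fin K → Finset (Fin K)) : ℕ :=
  Finset.univ.sup fun k : Fin K => max 2 (d k) + dpa d pa k

def dmax (d : Fin K → ℕ) : ℕ := Finset.univ.sup fun k : Fin K => max 2 (d k)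

/-- `κ` is a regular conditional distribution of the coordinates in `J` given those in `I`,
under `μ`. -/
def IsCondD (d : Fin K → ℕ) (μ : Measure (Pt d)) (I J : Finset (Fin K))
    (κ : PtOn d I → Measure (PtOn d J)) : Prop :=
  Measurable κ ∧ (∀ y, IsProbabilityMeasure (κ y)) ∧
    ∀ (A : Set (PtOn d I)) (B : Set (PtOn d J)), MeasurableSet A → MeasurableSet B →
      μ {x | projOn d I x ∈ A ∧ projOn d J x ∈ B} = ∫⁻ y in A, κ y B ∂(μ.map (projOn d I))

/-- `μ ∈ P_G`: for each node, some conditional distribution of `x_k` given all earlier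
coordinates factors through the parent coordinates only. -/
def MemPG (d : Fin K → ℕ) (pa : Fin K → Finset (Fin K)) (μ : Measure (Pt d)) : Prop :=
  ∀ k : Fin K, ∃ κ : PtOn d (pa k) → Measure (PtOn d ({k} : Finset (Fin K))),
    IsCondD d μ (below k ∪ pa k) {k}
      fun y => κ (restrOn d (fun _ hj => Finset.mem_union_right _ hj) y)

/-- Wasserstein-Lipschitz kernel assumption with constant `L`. -/
def WLip (d : Fin K → ℕ) (pa : Fin K → Finset (Fin K)) (L : ℝ) (μ : Measure (Pt d)) : Prop :=
  ∀ k : Fin K, 1 ≤ k.1 →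
    ∃ κ : PtOn d (pa k) → Measure (PtOn d ({k} : Finset (Fin K))),
      IsCondD d μ (pa k) {k} κ ∧
        ∀ x x' : PtOn d (pa k), Wass (κ x) (κ x') ≤ L * dist x x'

/-- Total-variation-Lipschitz kernel assumption with constant `L`. -/
def TVLip (d : Fin K → ℕ) (pa : Fin K → Finset (Fin K)) (L : ℝ) (μ : Measure (Pt d)) : Prop :=
  ∀ k : Fin K, 1 ≤ k.1 →
    (∃ κ : PtOn d (pa k) → Measure (PtOn d ({k} : Finset (Fin K))),
      IsCondD d μ (pa k) {k} κ ∧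
        ∀ x x', TVDist (κ x) (κ x') ≤ L * dist x x') ∧
    (∃ κ : PtOn d (pa k) → Measure (PtOn d (preOf pa k)),
      IsCondD d μ (pa k) (preOf pa k) κ ∧
        ∀ x x', TVDist (κ x) (κ x') ≤ L * dist x x') ∧
    (∃ κ : PtOn d ({k} : Finset (Fin K)) → Measure (PtOn d (pa k)),
      IsCondD d μ {k} (pa k) κ ∧
        ∀ x x', TVDist (κ x) (κ x') ≤ L * dist x x')

/-- Iterated construction of the graph product measure `∏_k κ_k(dx_k | x_pa(k))`. -/
def chainM (d : Fin K → ℕ) (pa : Fin K → Finset (Fin K))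
    (κ : ∀ k : Fin K, PtOn d (pa k) → Measure (PtOn d ({k} : Finset (Fin K)))) :
    ℕ → Measure (Pt d)
  | 0 => Measure.dirac (basePt d)
  | n + 1 =>
      if h : n < K then
        (chainM d pa κ n).bind fun x =>
          (κ ⟨n, h⟩ (projOn d (pa ⟨n, h⟩) x)).map fun y =>
            Function.update x ⟨n, h⟩ (y ⟨⟨n, h⟩, Finset.mem_singleton_self _⟩)
      else chainM d pa κ n

def graphProd (d : Fin K → ℕ) (pa : Fin K → Finset (Fin K))
    (κ : ∀ k : Fin K, PtOn d (pa k) → Measure (PtOn d ({k} : Finset (Fin K)))) :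
    Measure (Pt d) := chainM d pa κ K

/-- Completion of `x ∈ X_pa(k)` to a point of `X` (cell midpoints on `pa k`, `1/2` elsewhere). -/
def extendPt (d : Fin K → ℕ) (pa : Fin K → Finset (Fin K)) (η : ℕ) (k : Fin K)
    (x : PtOn d (pa k)) : Pt d :=
  fun j => if h : j ∈ pa k then (fun i => cMid η (x ⟨j, h⟩ i)) else fun _ => half

/-- The measure `ν^A` built from a choice `κ` of conditional kernels of `ν`. -/
def opA (d : Fin K → ℕ) (pa : Fin K → Finset (Fin K)) (η : ℕ) (ν : Measure (Pt d))
    (κ : ∀ k : Fin K, PtOn d (pa k) → Measure (PtOn d ({k} : Finset (Fin K)))) :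
    Measure (Pt d) :=
  graphProd d pa fun k x =>
    (condOn (ν.map (projOn d (pa k))) (cellOn d η (pa k) x) (midPtOn d η (pa k) x)).bind (κ k)

/-- The canonical (kernel-choice free) version of `ν^A`. -/
def opACanon (d : Fin K → ℕ) (pa : Fin K → Finset (Fin K)) (η : ℕ) (ν : Measure (Pt d)) :
    Measure (Pt d) :=
  graphProd d pa fun k x =>
    (condOn ν (projOn d (pa k) ⁻¹' cellOn d η (pa k) x) (extendPt d pa η k x)).map
      (projOn d ({k} : Finset (Fin K)))

/-- The kernel `μ^{bA}(dx_k | x_pa(k)) = Σ_{c_k} μ(c_k | c_pa(k)(x_pa(k))) μ_{k|c_k}(dx_k)`. -/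
def kerBA (d : Fin K → ℕ) (pa : Fin K → Finset (Fin K)) (η : ℕ) (μ : Measure (Pt d))
    (k : Fin K) (x : PtOn d (pa k)) : Measure (PtOn d ({k} : Finset (Fin K))) :=
  (((condOn μ (projOn d (pa k) ⁻¹' cellOn d η (pa k) x) (extendPt d pa η k x)).map
      (projOn d ({k} : Finset (Fin K)))).bind) fun z =>
    condOn (μ.map (projOn d ({k} : Finset (Fin K)))) (cellOn d η {k} z) (midPtOn d η {k} z)

/-- The measure `μ^{bA}`. -/
def opBA (d : Fin K → ℕ) (pa : Fin K → Finset (Fin K)) (η : ℕ) (μ : Measure (Pt d)) :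
    Measure (Pt d) := graphProd d pa (kerBA d pa η μ)

/-- The midpoint projection `μ^M` of `μ^{bA}`. -/
def opM (d : Fin K → ℕ) (pa : Fin K → Finset (Fin K)) (η : ℕ) (μ : Measure (Pt d)) :
    Measure (Pt d) := (opBA d pa η μ).map (midPt d η)

/-- The kernel of `μ^M` built from the conditional kernel `κ` of `μ`:
cell-average of `κ`, pushed to cell midpoints. -/
def kerM (d : Fin K → ℕ) (pa : Fin K → Finset (Fin K)) (η : ℕ) (μ : Measure (Pt d)) (k : Fin K)
    (κ : PtOn d (pa k) → Measure (PtOn d ({k} : Finset (Fin K)))) (y : PtOn d (pa k)) :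
    Measure (PtOn d ({k} : Finset (Fin K))) :=
  ((condOn (μ.map (projOn d (pa k))) (cellOn d η (pa k) y) (midPtOn d η (pa k) y)).bind κ).map
    (midPtOn d η ({k} : Finset (Fin K)))

/-- `m(dx_k | c_pa(k)(x))`: `m` conditioned on the parent cell of `x`, projected to node `k`. -/
def cellCondProj (d : Fin K → ℕ) (pa : Fin K → Finset (Fin K)) (η : ℕ) (m : Measure (Pt d))
    (k : Fin K) (x : Pt d) : Measure (PtOn d ({k} : Finset (Fin K))) :=
  (condOn m (projOn d (pa k) ⁻¹' cellOn d η (pa k) (projOn d (pa k) x)) (midPt d η x)).map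
    (projOn d ({k} : Finset (Fin K)))

/-- Minimax risk `V_Q(n)` for estimating a measure in `Q` from `n` i.i.d. samples,
in Wasserstein distance. -/
def minimax (d : Fin K → ℕ) (Q : Set (Measure (Pt d))) (n : ℕ) : ℝ :=
  ⨅ E : {E : (Fin n → Pt d) → Measure (Pt d) // Measurable E},
    ⨆ μ : Q, ∫ ω, Wass (μ : Measure (Pt d)) (E.1 ω) ∂(iid n (μ : Measure (Pt d)))

/-- Number of directed paths of length `ℓ` starting at `k` (following edge directions). -/
def pathCount (pa : Fin K → Finset (Fin K)) : ℕ → Fin K → ℕ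
  | 0, _ => 1
  | ℓ + 1, k => ∑ j ∈ Finset.univ.filter (fun j => k ∈ pa j), pathCount pa ℓ j

/-- The constant `M_{L,k} = 1 + Σ_{ℓ=1}^K a_{k,ℓ} L^ℓ`. -/
def MConst (pa : Fin K → Finset (Fin K)) (L : ℝ) (k : Fin K) : ℝ :=
  1 + ∑ ℓ ∈ Finset.Icc 1 K, (pathCount pa ℓ k : ℝ) * L ^ ℓ

/-- Lebesgue measure on `[0,1]^d = Π_k Π_i [0,1]`. -/
def lebPt (d : Fin K → ℕ) : Measure (Pt d) :=
  Measure.pi fun k => Measure.pi fun _ : Fin (d k) => (volume : Measure ℝ).comap Subtype.val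

/-- Product of the (one-node) marginals of `ν`. -/
def prodMarg (d : Fin K → ℕ) (ν : Measure (Pt d)) : Measure (Pt d) :=
  Measure.pi fun k => ν.map fun x => x k

/-- Cell average `f^ν` of `f` w.r.t. the product of the marginals of `ν`. -/
def fAvg (d : Fin K → ℕ) (η : ℕ) (ν : Measure (Pt d)) (f : Pt d → ℝ) (x : Pt d) : ℝ :=
  if prodMarg d ν (cylOf d η Finset.univ x) = 0 then 0
  else (∫ y in cylOf d η Finset.univ x, f y ∂prodMarg d ν) /
    (prodMarg d ν (cylOf d η Finset.univ x)).toReal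

/-- Combining points over two disjoint blocks of nodes. -/
def glue (d : Fin K → ℕ) {J J' : Finset (Fin K)} (p : PtOn d J × PtOn d J') :
    PtOn d (J ∪ J') := fun j =>
  if h : j.1 ∈ J then p.1 ⟨j.1, h⟩
  else p.2 ⟨j.1, by
    rcases Finset.mem_union.mp j.2 with h' | h'
    · exact absurd h' h
    · exact h'⟩

/-- `X_J` and `X_J'` are conditionally independent given `X_I` under `μ`. -/
def CondIndepOn (d : Fin K → ℕ) (μ : Measure (Pt d)) (I J J' : Finset (Fin K)) : Prop :=
  ∃ (κJ : PtOn d I → Measure (PtOn d J)) (κJ' : PtOn d I → Measure (PtOn d J')),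
    IsCondD d μ I J κJ ∧ IsCondD d μ I J' κJ' ∧
      IsCondD d μ I (J ∪ J') fun y => ((κJ y).prod (κJ' y)).map (glue d)

/-- The set `P_CI` of probability measures all of whose disjoint coordinate blocks are
conditionally independent given any disjoint nonempty block. -/
def PCI (d : Fin K → ℕ) : Set (Measure (Pt d)) :=
  {μ | IsProbabilityMeasure μ ∧
    ∀ I J J' : Finset (Fin K), I.Nonempty → Disjoint I J → Disjoint I J' → Disjoint J J' →
      CondIndepOn d μ I J J'}

end Graphical

section TwoBlocks

abbrev Vec (m : ℕ) : Type := Fin m → I01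

def cellV (η : ℕ) {m : ℕ} (x : Vec m) : Set (Vec m) :=
  {y | ∀ i, cIdx η (y i) = cIdx η (x i)}

def midV (η : ℕ) {m : ℕ} (x : Vec m) : Vec m := fun i => cMid η (x i)

/-- `ν^A` for two blocks and the graph `1 → 2`. -/
def opA2 {m₁ m₂ : ℕ} (η : ℕ) (ν : Measure (Vec m₁ × Vec m₂)) : Measure (Vec m₁ × Vec m₂) :=
  ν.bind fun p =>
    ((condOn ν (Prod.fst ⁻¹' cellV η p.1) (midV η p.1, midV η p.2)).map Prod.snd).map
      fun y => (p.1, y)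

/-- `μ^{bA}` for two blocks:  `Σ_{c₁,c₂} μ(c₁ × c₂) (μ_{1|c₁} ⊗ μ_{2|c₂})`. -/
def opBA2 {m₁ m₂ : ℕ} (η : ℕ) (μ : Measure (Vec m₁ × Vec m₂)) : Measure (Vec m₁ × Vec m₂) :=
  μ.bind fun p =>
    (condOn (μ.map Prod.fst) (cellV η p.1) (midV η p.1)).prod
      (condOn (μ.map Prod.snd) (cellV η p.2) (midV η p.2))

/-- The kernel `μ^{bA}(dx₂ | x₁) = Σ_{c₂} μ(c₂ | c₁(x₁)) μ_{2|c₂}(dx₂)`. -/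
def kerBA2 {m₁ m₂ : ℕ} (η : ℕ) (μ : Measure (Vec m₁ × Vec m₂)) (x₁ : Vec m₁) :
    Measure (Vec m₂) :=
  (((condOn μ (Prod.fst ⁻¹' cellV η x₁) (midV η x₁, fun _ => half)).map Prod.snd).bind) fun z =>
    condOn (μ.map Prod.snd) (cellV η z) (midV η z)

/-- `κ` is a conditional distribution of the second block given the first, under `μ`. -/
def IsCD2 {m₁ m₂ : ℕ} (μ : Measure (Vec m₁ × Vec m₂)) (κ : Vec m₁ → Measure (Vec m₂)) : Prop :=
  Measurable κ ∧ (∀ x, IsProbabilityMeasure (κ x)) ∧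
    ∀ (A : Set (Vec m₁)) (B : Set (Vec m₂)), MeasurableSet A → MeasurableSet B →
      μ (A ×ˢ B) = ∫⁻ x in A, κ x B ∂(μ.map Prod.fst)

end TwoBlocks

end
section Stmt8Aux
noncomputable section

variable {K : ℕ}

lemma I01_comap_prob :
    IsProbabilityMeasure ((volume : Measure ℝ).comap Subtype.val : Measure I01) := by
  constructor
  rw [MeasurableEmbedding.comap_apply (MeasurableEmbedding.subtype_coe measurableSet_Icc)]
  rw [Set.image_univ, Subtype.range_coe_subtype]
  rw [show {x : ℝ | x ∈ unitInterval} = Set.Icc (0:ℝ) 1 from rfl, Real.volume_Icc]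
  norm_num

instance : IsProbabilityMeasure ((volume : Measure ℝ).comap Subtype.val : Measure I01) :=
  I01_comap_prob

def nodeVol (d : Fin K → ℕ) (k : Fin K) : Measure (Coord d k) :=
  Measure.pi fun _ : Fin (d k) => (volume : Measure ℝ).comap Subtype.val

instance (d : Fin K → ℕ) (k : Fin K) : IsProbabilityMeasure (nodeVol d k) := by
  unfold nodeVol; infer_instance

abbrev CmplOn (d : Fin K → ℕ) (I : Finset (Fin K)) : Type :=
  ∀ j : {k : Fin K // k ∉ I}, Coord d j.1

def lebI (d : Fin K → ℕ) (I : Finset (Fin K)) : Measure (PtOn d I) :=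
  Measure.pi fun j => nodeVol d j.1

def lebC (d : Fin K → ℕ) (I : Finset (Fin K)) : Measure (CmplOn d I) :=
  Measure.pi fun j => nodeVol d j.1

instance (d : Fin K → ℕ) (I : Finset (Fin K)) : IsProbabilityMeasure (lebI d I) := by
  unfold lebI; infer_instance

instance (d : Fin K → ℕ) (I : Finset (Fin K)) : IsProbabilityMeasure (lebC d I) := by
  unfold lebC; infer_instance

def splitE (d : Fin K → ℕ) (I : Finset (Fin K)) : Pt d ≃ᵐ PtOn d I × CmplOn d I :=
  MeasurableEquiv.piEquivPiSubtypeProd (fun k => Coord d k) (fun k => k ∈ I)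

def comb (d : Fin K → ℕ) (I : Finset (Fin K)) (y : PtOn d I) (z : CmplOn d I) : Pt d :=
  (splitE d I).symm (y, z)

lemma comb_apply_mem {d : Fin K → ℕ} {I : Finset (Fin K)} (y : PtOn d I) (z : CmplOn d I)
    {k : Fin K} (h : k ∈ I) : comb d I y z k = y ⟨k, h⟩ := by
  show (Equiv.piEquivPiSubtypeProd (fun k => k ∈ I) (fun k => Coord d k)).symm (y, z) k = _
  rw [Equiv.piEquivPiSubtypeProd_symm_apply]
  exact dif_pos h

lemma comb_apply_not_mem {d : Fin K → ℕ} {I : Finset (Fin K)} (y : PtOn d I) (z : CmplOn d I)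
    {k : Fin K} (h : k ∉ I) : comb d I y z k = z ⟨k, h⟩ := by
  show (Equiv.piEquivPiSubtypeProd (fun k => k ∈ I) (fun k => Coord d k)).symm (y, z) k = _
  rw [Equiv.piEquivPiSubtypeProd_symm_apply]
  exact dif_neg h

lemma proj_comb (d : Fin K → ℕ) (I : Finset (Fin K)) (y : PtOn d I) (z : CmplOn d I) :
    projOn d I (comb d I y z) = y := by
  funext j
  show comb d I y z j.1 = y j
  rw [comb_apply_mem y z j.2]

def projC (d : Fin K → ℕ) {I J : Finset (Fin K)} (hIJ : ∀ k ∈ J, k ∉ I) (z : CmplOn d I) :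
    PtOn d J := fun j => z ⟨j.1, hIJ j.1 j.2⟩

lemma proj_comb_J (d : Fin K → ℕ) {I J : Finset (Fin K)} (hIJ : ∀ k ∈ J, k ∉ I)
    (y : PtOn d I) (z : CmplOn d I) :
    projOn d J (comb d I y z) = projC d hIJ z := by
  funext j
  show comb d I y z (j : Fin K) = z ⟨(j : Fin K), hIJ j.1 j.2⟩
  rw [comb_apply_not_mem y z (hIJ j.1 j.2)]

lemma meas_projOn (d : Fin K → ℕ) (I : Finset (Fin K)) : Measurable (projOn d I) :=
  measurable_pi_lambda _ fun j => measurable_pi_apply _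

lemma meas_projC (d : Fin K → ℕ) {I J : Finset (Fin K)} (hIJ : ∀ k ∈ J, k ∉ I) :
    Measurable (projC d hIJ) :=
  measurable_pi_lambda _ fun j => measurable_pi_apply _

lemma splitE_mp (d : Fin K → ℕ) (I : Finset (Fin K)) :
    MeasurePreserving (splitE d I) (lebPt d) ((lebI d I).prod (lebC d I)) := by
  have h := measurePreserving_piEquivPiSubtypeProd (nodeVol d) (fun k => k ∈ I)
  convert h using 2
  · rfl
  · rfl
  · simp only [lebI, lebC]; congr!
  · simp only [lebI, lebC]

lemma lint_split (d : Fin K → ℕ) (I : Finset (Fin K)) (h : Pt d → ℝ≥0∞) (hh : Measurable h) :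
    ∫⁻ x, h x ∂(lebPt d) = ∫⁻ y, ∫⁻ z, h (comb d I y z) ∂(lebC d I) ∂(lebI d I) := by
  have h1 := ((splitE_mp d I).symm (splitE d I)).lintegral_comp hh
  rw [← h1, lintegral_prod (μ := lebI d I) (ν := lebC d I)
    (f := fun q => h ((splitE d I).symm q))
    (Measurable.aemeasurable (hh.comp (splitE d I).symm.measurable))]
  rfl

def Fr (d : Fin K → ℕ) (I : Finset (Fin K)) (f : Pt d → ℝ) (y : PtOn d I) (z : CmplOn d I) : ℝ :=
  f (comb d I y z)

def Gr (d : Fin K → ℕ) (I : Finset (Fin K)) (f : Pt d → ℝ) (y : PtOn d I) : ℝ :=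
  ∫ z, Fr d I f y z ∂(lebC d I)

def geE (d : Fin K → ℕ) (I : Finset (Fin K)) (f : Pt d → ℝ) (y : PtOn d I) : ℝ≥0∞ :=
  ∫⁻ z, ENNReal.ofReal (Fr d I f y z) ∂(lebC d I)

def kerD (d : Fin K → ℕ) {I J : Finset (Fin K)} (hIJ : ∀ k ∈ J, k ∉ I) (f : Pt d → ℝ)
    (y : PtOn d I) : Measure (PtOn d J) :=
  ((lebC d I).withDensity fun z => ENNReal.ofReal (Fr d I f y z) / geE d I f y).map
    (projC d hIJ)

end
end Stmt8Aux
section Stmt8Main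
noncomputable section

variable {K : ℕ}

lemma density_kernel (d : Fin K → ℕ) (a b D : ℝ) (ha : 0 < a) (hb : 0 < b)
    (μ : Measure (Pt d)) (f : Pt d → ℝ)
    (hLip : ∀ x y : Pt d, |f x - f y| ≤ D * dist x y)
    (hval : ∀ x, f x ∈ Set.Icc a b)
    (hdens : μ = (lebPt d).withDensity fun x => ENNReal.ofReal (f x))
    (I J : Finset (Fin K)) (hIJ : ∀ k ∈ J, k ∉ I) :
    ∃ κ : PtOn d I → Measure (PtOn d J), IsCondD d μ I J κ ∧
      ∀ x x', TVDist (κ x) (κ x') ≤ (D / a + b / a ^ 2) * dist x x' := by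
  classical
  have hfc : Continuous f := by
    have : LipschitzWith (Real.toNNReal (max D 0)) f := by
      apply LipschitzWith.of_dist_le_mul
      intro x y
      rw [Real.dist_eq, Real.coe_toNNReal _ (le_max_right D 0)]
      exact (hLip x y).trans (mul_le_mul_of_nonneg_right (le_max_left _ _) dist_nonneg)
    exact this.continuous
  have hfm : Measurable f := hfc.measurable
  have hFq : Measurable fun q : PtOn d I × CmplOn d I =>
      ENNReal.ofReal (f ((splitE d I).symm q)) :=
    ENNReal.measurable_ofReal.comp (hfm.comp (splitE d I).symm.measurable)
  have hFmy : ∀ y, Measurable (Fr d I f y) := fun y =>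
    hfm.comp ((splitE d I).symm.measurable.comp measurable_prodMk_left)
  have hofm : Measurable fun x : Pt d => ENNReal.ofReal (f x) :=
    ENNReal.measurable_ofReal.comp hfm
  have hoFr : ∀ y, Measurable fun z => ENNReal.ofReal (Fr d I f y z) := fun y =>
    ENNReal.measurable_ofReal.comp (hFmy y)
  have haF : ∀ y z, a ≤ Fr d I f y z := fun y z => (hval _).1
  have hFb : ∀ y z, Fr d I f y z ≤ b := fun y z => (hval _).2
  have hF0 : ∀ y z, 0 ≤ Fr d I f y z := fun y z => ha.le.trans (haF y z)
  have hFint : ∀ y, Integrable (Fr d I f y) (lebC d I) := by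
    intro y
    refine (integrable_const b).mono' (hFmy y).aestronglyMeasurable (ae_of_all _ fun z => ?_)
    rw [Real.norm_eq_abs, abs_of_nonneg (hF0 y z)]
    exact hFb y z
  have hGa : ∀ y, a ≤ Gr d I f y := by
    intro y
    calc a = ∫ _z, a ∂(lebC d I) := by simp
      _ ≤ Gr d I f y := integral_mono (integrable_const a) (hFint y) (haF y)
  have hGb : ∀ y, Gr d I f y ≤ b := by
    intro y
    calc Gr d I f y ≤ ∫ _z, b ∂(lebC d I) :=
          integral_mono (hFint y) (integrable_const b) (hFb y)
      _ = b := by simp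
  have hG0 : ∀ y, 0 < Gr d I f y := fun y => lt_of_lt_of_le ha (hGa y)
  have hge : ∀ y, geE d I f y = ENNReal.ofReal (Gr d I f y) := fun y =>
    (ofReal_integral_eq_lintegral_ofReal (hFint y) (ae_of_all _ (hF0 y))).symm
  have hge0 : ∀ y, geE d I f y ≠ 0 := by
    intro y
    rw [hge y]
    simp only [ne_eq, ENNReal.ofReal_eq_zero, not_le]
    exact hG0 y
  have hgeT : ∀ y, geE d I f y ≠ ⊤ := fun y => by rw [hge y]; exact ENNReal.ofReal_ne_top
  have hgem : Measurable (geE d I f) := Measurable.lintegral_prod_right' hFq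
  have hker_apply : ∀ y (s : Set (PtOn d J)), MeasurableSet s →
      kerD d hIJ f y s
        = (∫⁻ z in (projC d hIJ) ⁻¹' s, ENNReal.ofReal (Fr d I f y z) ∂(lebC d I))
            / geE d I f y := by
    intro y s hs
    simp only [kerD]
    rw [Measure.map_apply (meas_projC d hIJ) hs, withDensity_apply _ (meas_projC d hIJ hs)]
    simp only [div_eq_mul_inv]
    rw [lintegral_mul_const _ (hoFr y)]
  have hkerm : ∀ (s : Set (PtOn d J)), MeasurableSet s →
      Measurable fun y => kerD d hIJ f y s := by
    intro s hs
    have hps : MeasurableSet ((projC d hIJ) ⁻¹' s) := meas_projC d hIJ hs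
    simp_rw [hker_apply _ s hs]
    apply Measurable.div ?_ hgem
    have e1 : (fun y => ∫⁻ z in (projC d hIJ) ⁻¹' s, ENNReal.ofReal (Fr d I f y z) ∂(lebC d I))
        = fun y => ∫⁻ z, (Set.univ ×ˢ ((projC d hIJ) ⁻¹' s)).indicator
            (fun q : PtOn d I × CmplOn d I => ENNReal.ofReal (f ((splitE d I).symm q))) (y, z)
            ∂(lebC d I) := by
      funext y
      rw [← lintegral_indicator hps _]
      refine lintegral_congr fun z => ?_
      by_cases hz : z ∈ (projC d hIJ) ⁻¹' s
      · rw [Set.indicator_of_mem hz, Set.indicator_of_mem (by exact ⟨Set.mem_univ _, hz⟩)]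
        rfl
      · rw [Set.indicator_of_notMem hz, Set.indicator_of_notMem (by
          simp only [Set.mem_prod, Set.mem_univ, true_and]; exact hz)]
    rw [e1]
    exact Measurable.lintegral_prod_right' (hFq.indicator (MeasurableSet.univ.prod hps))
  have hker_prob : ∀ y, IsProbabilityMeasure (kerD d hIJ f y) := by
    intro y
    constructor
    rw [hker_apply y Set.univ MeasurableSet.univ, Set.preimage_univ, Measure.restrict_univ]
    exact ENNReal.div_self (hge0 y) (hgeT y)
  have hmap : μ.map (projOn d I) = (lebI d I).withDensity (geE d I f) := by
    ext A hA
    rw [Measure.map_apply (meas_projOn d I) hA, withDensity_apply _ hA, hdens,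
      withDensity_apply _ (meas_projOn d I hA),
      ← lintegral_indicator (meas_projOn d I hA) _, ← lintegral_indicator hA _,
      lint_split d I _ (hofm.indicator (meas_projOn d I hA))]
    refine lintegral_congr fun y => ?_
    by_cases hy : y ∈ A
    · rw [Set.indicator_of_mem hy]
      refine lintegral_congr fun z => ?_
      rw [Set.indicator_of_mem (by rw [Set.mem_preimage, proj_comb]; exact hy)]
      rfl
    · rw [Set.indicator_of_notMem hy]
      have hz : ∀ z, (projOn d I ⁻¹' A).indicator (fun x => ENNReal.ofReal (f x))
          (comb d I y z) = 0 := fun z =>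
        Set.indicator_of_notMem (by rw [Set.mem_preimage, proj_comb]; exact hy) _
      simp only [hz, lintegral_zero]
  have hcond : ∀ (A : Set (PtOn d I)) (B : Set (PtOn d J)),
      MeasurableSet A → MeasurableSet B →
      μ {x | projOn d I x ∈ A ∧ projOn d J x ∈ B}
        = ∫⁻ y in A, kerD d hIJ f y B ∂(μ.map (projOn d I)) := by
    intro A B hA hB
    have hS : MeasurableSet {x | projOn d I x ∈ A ∧ projOn d J x ∈ B} :=
      (meas_projOn d I hA).inter (meas_projOn d J hB)
    conv_rhs => rw [hmap]
    rw [restrict_withDensity hA,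
      lintegral_withDensity_eq_lintegral_mul _ hgem (hkerm B hB),
      ← lintegral_indicator hA _]
    conv_lhs => rw [hdens]
    rw [withDensity_apply _ hS, ← lintegral_indicator hS _,
      lint_split d I _ (hofm.indicator hS)]
    refine lintegral_congr fun y => ?_
    by_cases hy : y ∈ A
    · rw [Set.indicator_of_mem hy]
      show _ = geE d I f y * kerD d hIJ f y B
      rw [hker_apply y B hB, mul_comm, ENNReal.div_mul_cancel (hge0 y) (hgeT y),
        ← lintegral_indicator (meas_projC d hIJ hB) _]
      refine lintegral_congr fun z => ?_
      by_cases hz : z ∈ (projC d hIJ) ⁻¹' B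
      · rw [Set.indicator_of_mem hz, Set.indicator_of_mem (by
          refine ⟨?_, ?_⟩
          · rw [proj_comb]; exact hy
          · rw [proj_comb_J d hIJ]; exact hz)]
        rfl
      · rw [Set.indicator_of_notMem hz, Set.indicator_of_notMem (by
          intro hc
          apply hz
          have := hc.2
          rwa [proj_comb_J d hIJ] at this)]
    · rw [Set.indicator_of_notMem hy]
      have hz : ∀ z, Set.indicator {x | projOn d I x ∈ A ∧ projOn d J x ∈ B}
          (fun x => ENNReal.ofReal (f x)) (comb d I y z) = 0 := fun z =>
        Set.indicator_of_notMem (by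
          intro hc
          apply hy
          have := hc.1
          rwa [proj_comb] at this) _
      simp only [hz, lintegral_zero]
  refine ⟨kerD d hIJ f, ⟨Measure.measurable_of_measurable_coe _ hkerm, hker_prob, hcond⟩, ?_⟩
  intro y y'
  have key : ∀ (v : PtOn d I) (h : PtOn d J → ℝ), Measurable h →
      ∫ w, h w ∂(kerD d hIJ f v)
        = ∫ z, (Fr d I f v z / Gr d I f v) * h (projC d hIJ z) ∂(lebC d I) := by
    intro v h hm
    simp only [kerD]
    rw [integral_map (meas_projC d hIJ).aemeasurable hm.aestronglyMeasurable]
    have hdd : (fun z => ENNReal.ofReal (Fr d I f v z) / geE d I f v)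
        = fun z => ((Real.toNNReal (Fr d I f v z / Gr d I f v) : ℝ≥0) : ℝ≥0∞) := by
      funext z
      rw [hge v, ← ENNReal.ofReal_div_of_pos (hG0 v)]
      rfl
    rw [hdd, integral_withDensity_eq_integral_smul (((hFmy v).div_const _).real_toNNReal) _]
    have e2 : (fun z => Real.toNNReal (Fr d I f v z / Gr d I f v) • h (projC d hIJ z))
        = fun z => (Fr d I f v z / Gr d I f v) * h (projC d hIJ z) := by
      funext z
      rw [NNReal.smul_def, Real.coe_toNNReal _ (div_nonneg (hF0 v z) (hG0 v).le),
        smul_eq_mul]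
    rw [e2]
  have hDnn : dist y y' ≠ 0 → 0 ≤ D := by
    intro hd0
    set z0 : CmplOn d I := fun _ _ => half with hz0
    have hne : comb d I y z0 ≠ comb d I y' z0 := by
      intro hc
      apply hd0
      have h2 := congrArg (projOn d I) hc
      rw [proj_comb, proj_comb] at h2
      rw [h2, dist_self]
    have h1 := hLip (comb d I y z0) (comb d I y' z0)
    have h2 : 0 < dist (comb d I y z0) (comb d I y' z0) := dist_pos.mpr hne
    nlinarith [abs_nonneg (f (comb d I y z0) - f (comb d I y' z0))]
  unfold TVDist
  apply Real.sSup_le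
  · rintro r ⟨h, hm, hbd, rfl⟩
    rcases eq_or_ne (dist y y') 0 with hd0 | hd0
    · have hyy : y = y' := eq_of_dist_eq_zero hd0
      rw [hyy]
      simp
    · have hD : 0 ≤ D := hDnn hd0
      have hcd : ∀ z, dist (comb d I y z) (comb d I y' z) ≤ dist y y' := by
        intro z
        rw [dist_pi_le_iff dist_nonneg]
        intro k
        by_cases hk : k ∈ I
        · rw [comb_apply_mem y z hk, comb_apply_mem y' z hk]
          exact dist_le_pi_dist y y' ⟨k, hk⟩
        · rw [comb_apply_not_mem y z hk, comb_apply_not_mem y' z hk, dist_self]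
          exact dist_nonneg
      have hFd : ∀ z, |Fr d I f y z - Fr d I f y' z| ≤ D * dist y y' := fun z =>
        (hLip _ _).trans (mul_le_mul_of_nonneg_left (hcd z) hD)
      have hintabs : Integrable (fun z => |Fr d I f y z - Fr d I f y' z|) (lebC d I) :=
        ((hFint y).sub (hFint y')).abs
      have hIF : ∫ z, |Fr d I f y z - Fr d I f y' z| ∂(lebC d I) ≤ D * dist y y' := by
        calc ∫ z, |Fr d I f y z - Fr d I f y' z| ∂(lebC d I)
            ≤ ∫ _z, D * dist y y' ∂(lebC d I) :=
              integral_mono hintabs (integrable_const _) hFd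
          _ = D * dist y y' := by simp
      have hIF0 : 0 ≤ ∫ z, |Fr d I f y z - Fr d I f y' z| ∂(lebC d I) :=
        integral_nonneg fun z => abs_nonneg _
      have hGd : |Gr d I f y - Gr d I f y'| ≤ D * dist y y' := by
        have h1 : Gr d I f y - Gr d I f y'
            = ∫ z, (Fr d I f y z - Fr d I f y' z) ∂(lebC d I) :=
          (integral_sub (hFint y) (hFint y')).symm
        rw [h1]
        refine le_trans ?_ hIF
        have := norm_integral_le_integral_norm (μ := lebC d I)
          (f := fun z => Fr d I f y z - Fr d I f y' z)
        simpa only [Real.norm_eq_abs] using this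
      -- pointwise quotient bound
      have hpt : ∀ z, |Fr d I f y z / Gr d I f y - Fr d I f y' z / Gr d I f y'|
          ≤ |Fr d I f y z - Fr d I f y' z| * (1 / Gr d I f y)
            + Fr d I f y' z * (|Gr d I f y - Gr d I f y'|
                / (Gr d I f y * Gr d I f y')) := by
        intro z
        have hGy := hG0 y
        have hGy' := hG0 y'
        have h1 : Fr d I f y z / Gr d I f y - Fr d I f y' z / Gr d I f y'
            = (Fr d I f y z - Fr d I f y' z) * (1 / Gr d I f y)
              + Fr d I f y' z * ((Gr d I f y' - Gr d I f y)
                  / (Gr d I f y * Gr d I f y')) := by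
          field_simp
          ring
        rw [h1]
        refine (abs_add_le _ _).trans ?_
        have e1 : |(1 : ℝ) / Gr d I f y| = 1 / Gr d I f y := abs_of_pos (by positivity)
        have e2 : |(Gr d I f y' - Gr d I f y) / (Gr d I f y * Gr d I f y')|
            = |Gr d I f y - Gr d I f y'| / (Gr d I f y * Gr d I f y') := by
          rw [abs_div, abs_of_pos (mul_pos hGy hGy'), abs_sub_comm]
        rw [abs_mul, abs_mul, e1, e2, abs_of_nonneg (hF0 y' z)]
      have hintq : Integrable (fun z => Fr d I f y z / Gr d I f y) (lebC d I) :=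
        (hFint y).div_const _
      have hintq' : Integrable (fun z => Fr d I f y' z / Gr d I f y') (lebC d I) :=
        (hFint y').div_const _
      have hIpp : ∫ z, |Fr d I f y z / Gr d I f y - Fr d I f y' z / Gr d I f y'| ∂(lebC d I)
          ≤ D * dist y y' * (1 / a) + D * dist y y' * (1 / a) := by
        have hint1 : Integrable
            (fun z => |Fr d I f y z - Fr d I f y' z| * (1 / Gr d I f y)) (lebC d I) :=
          hintabs.mul_const _
        have hint2 : Integrable (fun z => Fr d I f y' z
            * (|Gr d I f y - Gr d I f y'| / (Gr d I f y * Gr d I f y'))) (lebC d I) :=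
          (hFint y').mul_const _
        calc ∫ z, |Fr d I f y z / Gr d I f y - Fr d I f y' z / Gr d I f y'| ∂(lebC d I)
            ≤ ∫ z, (|Fr d I f y z - Fr d I f y' z| * (1 / Gr d I f y)
                + Fr d I f y' z * (|Gr d I f y - Gr d I f y'|
                    / (Gr d I f y * Gr d I f y'))) ∂(lebC d I) :=
              integral_mono ((hintq.sub hintq').abs) (hint1.add hint2) hpt
          _ = (∫ z, |Fr d I f y z - Fr d I f y' z| ∂(lebC d I)) * (1 / Gr d I f y)
                + Gr d I f y' * (|Gr d I f y - Gr d I f y'|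
                    / (Gr d I f y * Gr d I f y')) := by
              rw [integral_add hint1 hint2, integral_mul_const, integral_mul_const]
              rfl
          _ ≤ D * dist y y' * (1 / a) + D * dist y y' * (1 / a) := by
              have hGy := hG0 y
              have hGy' := hG0 y'
              have t1 : (∫ z, |Fr d I f y z - Fr d I f y' z| ∂(lebC d I)) * (1 / Gr d I f y)
                  ≤ D * dist y y' * (1 / a) := by
                apply mul_le_mul hIF (by
                  apply one_div_le_one_div_of_le ha (hGa y)) (by positivity) (by positivity)
              have t2 : Gr d I f y' * (|Gr d I f y - Gr d I f y'|
                  / (Gr d I f y * Gr d I f y')) ≤ D * dist y y' * (1 / a) := by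
                have e3 : Gr d I f y' * (|Gr d I f y - Gr d I f y'|
                    / (Gr d I f y * Gr d I f y'))
                    = |Gr d I f y - Gr d I f y'| * (1 / Gr d I f y) := by
                  field_simp
                rw [e3]
                apply mul_le_mul hGd (by
                  apply one_div_le_one_div_of_le ha (hGa y)) (by positivity) (by positivity)
              linarith
      -- main estimate
      rw [key y h hm, key y' h hm]
      have hmq : Measurable fun z => (Fr d I f y z / Gr d I f y) * h (projC d hIJ z) :=
        ((hFmy y).div_const _).mul (hm.comp (meas_projC d hIJ))
      have hmq' : Measurable fun z => (Fr d I f y' z / Gr d I f y') * h (projC d hIJ z) :=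
        ((hFmy y').div_const _).mul (hm.comp (meas_projC d hIJ))
      have hbq : ∀ (v : PtOn d I) z, |(Fr d I f v z / Gr d I f v) * h (projC d hIJ z)|
          ≤ (b / a) * (1 / 2) := by
        intro v z
        rw [abs_mul]
        apply mul_le_mul ?_ (hbd _) (abs_nonneg _) (by positivity)
        rw [abs_of_nonneg (div_nonneg (hF0 v z) (hG0 v).le)]
        exact div_le_div₀ hb.le (hFb v z) ha (hGa v)
      have hint1 : Integrable (fun z => (Fr d I f y z / Gr d I f y) * h (projC d hIJ z))
          (lebC d I) := by
        refine (integrable_const ((b / a) * (1 / 2))).mono' hmq.aestronglyMeasurable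
          (ae_of_all _ fun z => ?_)
        rw [Real.norm_eq_abs]
        exact hbq y z
      have hint2 : Integrable (fun z => (Fr d I f y' z / Gr d I f y') * h (projC d hIJ z))
          (lebC d I) := by
        refine (integrable_const ((b / a) * (1 / 2))).mono' hmq'.aestronglyMeasurable
          (ae_of_all _ fun z => ?_)
        rw [Real.norm_eq_abs]
        exact hbq y' z
      rw [← integral_sub hint1 hint2]
      have heq : (fun z => (Fr d I f y z / Gr d I f y) * h (projC d hIJ z)
          - (Fr d I f y' z / Gr d I f y') * h (projC d hIJ z))
          = fun z => (Fr d I f y z / Gr d I f y - Fr d I f y' z / Gr d I f y')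
              * h (projC d hIJ z) := by
        funext z
        ring
      rw [heq]
      have hintd : Integrable (fun z => (Fr d I f y z / Gr d I f y
          - Fr d I f y' z / Gr d I f y') * h (projC d hIJ z)) (lebC d I) := by
        have h5 := hint1.sub hint2
        refine h5.congr (ae_of_all _ fun z => ?_)
        simp only [Pi.sub_apply]
        ring
      have habs2 : Integrable (fun z => |Fr d I f y z / Gr d I f y
          - Fr d I f y' z / Gr d I f y'| * (1 / 2)) (lebC d I) :=
        ((hintq.sub hintq').abs).mul_const _
      calc ∫ z, (Fr d I f y z / Gr d I f y - Fr d I f y' z / Gr d I f y')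
              * h (projC d hIJ z) ∂(lebC d I)
          ≤ |∫ z, (Fr d I f y z / Gr d I f y - Fr d I f y' z / Gr d I f y')
              * h (projC d hIJ z) ∂(lebC d I)| := le_abs_self _
        _ ≤ ∫ z, |(Fr d I f y z / Gr d I f y - Fr d I f y' z / Gr d I f y')
              * h (projC d hIJ z)| ∂(lebC d I) := by
            have := norm_integral_le_integral_norm (μ := lebC d I)
              (f := fun z => (Fr d I f y z / Gr d I f y - Fr d I f y' z / Gr d I f y')
                * h (projC d hIJ z))
            simpa only [Real.norm_eq_abs] using this
        _ ≤ ∫ z, |Fr d I f y z / Gr d I f y - Fr d I f y' z / Gr d I f y'|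
              * (1 / 2) ∂(lebC d I) := by
            refine integral_mono hintd.abs habs2 fun z => ?_
            rw [abs_mul]
            exact mul_le_mul_of_nonneg_left (hbd _) (abs_nonneg _)
        _ = (∫ z, |Fr d I f y z / Gr d I f y - Fr d I f y' z / Gr d I f y'| ∂(lebC d I))
              * (1 / 2) := integral_mul_const _ _
        _ ≤ (D * dist y y' * (1 / a) + D * dist y y' * (1 / a)) * (1 / 2) := by
            exact mul_le_mul_of_nonneg_right hIpp (by norm_num)
        _ ≤ (D / a + b / a ^ 2) * dist y y' := by
            have h2 : 0 ≤ b / a ^ 2 * dist y y' := by positivity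
            have h3 : (D * dist y y' * (1 / a) + D * dist y y' * (1 / a)) * (1 / 2)
                = D / a * dist y y' := by ring
            have h4 : (D / a + b / a ^ 2) * dist y y'
                = D / a * dist y y' + b / a ^ 2 * dist y y' := by ring
            rw [h3, h4]
            linarith
  · rcases eq_or_ne (dist y y') 0 with hd0 | hd0
    · rw [hd0, mul_zero]
    · have hD : 0 ≤ D := hDnn hd0
      have : 0 ≤ D / a + b / a ^ 2 := by positivity
      exact mul_nonneg this dist_nonneg

end
end Stmt8Main
/-- Lemma: Lipschitz densities bounded away from zero give TV-Lipschitz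
kernels. If `0 < a < b`, `μ ∈ P_G` has a density `f` w.r.t. Lebesgue measure on `[0,1]^d`
which is `D`-Lipschitz with values in `[a,b]`, then `μ` satisfies the TV-Lipschitz kernel
assumption with constant `L = D/a + b/a²`. -/
theorem stmt8 {K : ℕ} (d : Fin K → ℕ) (pa : Fin K → Finset (Fin K))
    (hsort : SortedGraph pa) (a b D : ℝ) (ha : 0 < a) (hab : a < b)
    (μ : Measure (Pt d)) (hμ : IsProbabilityMeasure μ) (hPG : MemPG d pa μ)
    (f : Pt d → ℝ)
    (hLip : ∀ x y : Pt d, |f x - f y| ≤ D * dist x y)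
    (hval : ∀ x, f x ∈ Set.Icc a b)
    (hdens : μ = (lebPt d).withDensity fun x => ENNReal.ofReal (f x)) :
    TVLip d pa (D / a + b / a ^ 2) μ := by
  have hb : 0 < b := ha.trans hab
  intro k _hk
  refine ⟨?_, ?_, ?_⟩
  · exact density_kernel d a b D ha hb μ f hLip hval hdens (pa k) {k}
      (fun j hj => by
        rw [Finset.mem_singleton] at hj
        subst hj
        intro hmem
        exact absurd (hsort j j hmem) (lt_irrefl j))
  · exact density_kernel d a b D ha hb μ f hLip hval hdens (pa k) (preOf pa k)
      (fun j hj => (Finset.mem_sdiff.mp hj).2)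
  · exact density_kernel d a b D ha hb μ f hLip hval hdens {k} (pa k)
      (fun j hj => Finset.notMem_singleton.mpr (ne_of_lt (hsort k j hj)))
end

section
/- Let μ ∈ P(X), 2 ≤ k ≤ K, and let c_pa(k) ∈ A_pa(k) be a cell. Then for every cell c_k ∈ A_k one has μ^{bA}(c_k | c_pa(k)) = μ(c_k | c_pa(k)). In particular, if G contains no colliders, then for every fully connected subset I ⊆ {1,...,K} and every cell c_I ∈ A_I one has μ^{bA}(c_I) = μ(c_I). -/
open MeasureTheory Finset
open scoped ENNReal NNReal

section Stmt9Aux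

open ProbabilityTheory

lemma cIdx_le' (η : ℕ) (t : I01) : cIdx η t ≤ 2 ^ η - 1 := min_le_right _ _

/-- Midpoint of the `n`-th dyadic cell (clamped). -/
noncomputable def mkMid (η n : ℕ) : I01 :=
  if h : (n : ℝ) ≤ 2 ^ η - 1 then
    ⟨((n : ℝ) + 1 / 2) / 2 ^ η, by
      constructor
      · positivity
      · rw [div_le_one (by positivity)]; linarith⟩
  else half

lemma cMid_eq_mkMid (η : ℕ) (t : I01) : cMid η t = mkMid η (cIdx η t) := by
  rw [mkMid, dif_pos (cIdx_le_real η t)]; rfl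

lemma cIdx_mkMid (η n : ℕ) (hn : n ≤ 2 ^ η - 1) : cIdx η (mkMid η n) = n := by
  have h1 : (1 : ℕ) ≤ 2 ^ η := Nat.one_le_two_pow
  have hn' : (n : ℝ) ≤ 2 ^ η - 1 := by
    calc (n : ℝ) ≤ ((2 ^ η - 1 : ℕ) : ℝ) := by exact_mod_cast hn
      _ = 2 ^ η - 1 := by rw [Nat.cast_sub h1]; push_cast; ring
  have hv : ((mkMid η n : I01) : ℝ) = ((n : ℝ) + 1 / 2) / 2 ^ η := by
    rw [mkMid, dif_pos hn']
  have hmul : ((mkMid η n : I01) : ℝ) * 2 ^ η = (n : ℝ) + 1 / 2 := by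
    rw [hv]; field_simp
  have hfloor : ⌊((mkMid η n : I01) : ℝ) * 2 ^ η⌋₊ = n := by
    rw [hmul, Nat.floor_eq_iff (by positivity)]
    exact ⟨by linarith, by linarith⟩
  rw [cIdx, hfloor, min_eq_left hn]

lemma cIdx_cMid (η : ℕ) (t : I01) : cIdx η (cMid η t) = cIdx η t := by
  rw [cMid_eq_mkMid, cIdx_mkMid η _ (cIdx_le' η t)]

lemma measurable_cIdx (η : ℕ) : Measurable (cIdx η) :=
  ((measurable_subtype_coe.mul_const _).nat_floor).min measurable_const

/-- `condOn` of a probability measure is a probability measure. -/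
lemma condOn_isProb {α : Type*} [MeasurableSpace α] (m : Measure α) [IsProbabilityMeasure m]
    (s : Set α) (x₀ : α) : IsProbabilityMeasure (condOn m s x₀) := by
  rw [condOn]
  split_ifs with h
  · infer_instance
  · refine ⟨?_⟩
    rw [Measure.smul_apply, Measure.restrict_apply_univ, smul_eq_mul]
    exact ENNReal.inv_mul_cancel h (measure_ne_top m s)

lemma condOn_apply_of_ne {α : Type*} [MeasurableSpace α] (m : Measure α) {s : Set α} (x₀ : α)
    (h : m s ≠ 0) {t : Set α} (ht : MeasurableSet t) :
    condOn m s x₀ t = m (t ∩ s) / m s := by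
  rw [condOn, if_neg h, Measure.smul_apply, Measure.restrict_apply ht, smul_eq_mul,
    ENNReal.div_eq_inv_mul]

lemma condOn_apply_of_eq {α : Type*} [MeasurableSpace α] (m : Measure α) {s : Set α} (x₀ : α)
    (h : m s = 0) {t : Set α} (ht : MeasurableSet t) :
    condOn m s x₀ t = t.indicator 1 x₀ := by
  rw [condOn, if_pos h, Measure.dirac_apply' _ ht]

/-- Mapping a parametrized measurable family by a parametrized measurable map is measurable. -/
lemma measurable_map_param {α β γ : Type*} [MeasurableSpace α] [MeasurableSpace β]
    [MeasurableSpace γ] (κ : α → Measure β) (hκ : Measurable κ)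
    (hp : ∀ a, IsProbabilityMeasure (κ a)) (g : α → β → γ)
    (hg : Measurable (Function.uncurry g)) :
    Measurable fun a => (κ a).map (g a) := by
  let k : Kernel α β := ⟨κ, hκ⟩
  haveI : IsMarkovKernel k := ⟨hp⟩
  let k2 : Kernel α (α × β) := (Kernel.deterministic (id : α → α) measurable_id) ×ₖ k
  have hmeas : Measurable fun a => (k2.map (Function.uncurry g)) a := (k2.map _).measurable
  have heq : ∀ a, (k2.map (Function.uncurry g)) a = (κ a).map (g a) := by
    intro a
    haveI : IsProbabilityMeasure (κ a) := hp a
    rw [Kernel.map_apply _ hg, Kernel.prod_apply, Kernel.deterministic_apply]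
    show ((Measure.dirac a).prod (κ a)).map (Function.uncurry g) = _
    rw [Measure.dirac_prod, Measure.map_map hg measurable_prodMk_left]
    rfl
  simpa only [funext heq] using hmeas

variable {K : ℕ} (d : Fin K → ℕ) (pa : Fin K → Finset (Fin K)) (η : ℕ)

abbrev IdxT (J : Finset (Fin K)) : Type := ∀ j : J, Fin (d j.1) → ℕ

noncomputable def idxOn (J : Finset (Fin K)) (y : PtOn d J) : IdxT d J := fun j i => cIdx η (y j i)

noncomputable def qF (J : Finset (Fin K)) (y : Pt d) : IdxT d J := fun j i => cIdx η (y j.1 i)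

lemma measurable_idxOn (J : Finset (Fin K)) : Measurable (idxOn d η J) :=
  measurable_pi_lambda _ fun j => measurable_pi_lambda _ fun i =>
    (measurable_cIdx η).comp ((measurable_pi_apply i).comp (measurable_pi_apply j))

lemma measurable_qF (J : Finset (Fin K)) : Measurable (qF d η J) :=
  measurable_pi_lambda _ fun j => measurable_pi_lambda _ fun i =>
    (measurable_cIdx η).comp ((measurable_pi_apply i).comp (measurable_pi_apply j.1))

lemma measurable_projOn (J : Finset (Fin K)) : Measurable (projOn d J) :=
  measurable_pi_lambda _ fun j => measurable_pi_apply j.1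

lemma cellOn_eq_preimage (J : Finset (Fin K)) (x : PtOn d J) :
    cellOn d η J x = idxOn d η J ⁻¹' {idxOn d η J x} := by
  ext y
  simp only [Set.mem_preimage, Set.mem_singleton_iff, cellOn, Set.mem_setOf_eq]
  constructor
  · intro hy; funext j i; exact hy j i
  · intro hy j i; exact congrFun (congrFun hy j) i

lemma cylOf_eq_preimage (J : Finset (Fin K)) (x : Pt d) :
    cylOf d η J x = qF d η J ⁻¹' {qF d η J x} := by
  ext y
  simp only [Set.mem_preimage, Set.mem_singleton_iff, cylOf, Set.mem_setOf_eq]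
  constructor
  · intro hy; funext j i; exact hy j.1 j.2 i
  · intro hy j hj i; exact congrFun (congrFun hy ⟨j, hj⟩) i

lemma measurableSet_cellOn (J : Finset (Fin K)) (x : PtOn d J) :
    MeasurableSet (cellOn d η J x) := by
  rw [cellOn_eq_preimage]; exact measurable_idxOn d η J (measurableSet_singleton _)

lemma measurableSet_cylOf (J : Finset (Fin K)) (x : Pt d) :
    MeasurableSet (cylOf d η J x) := by
  rw [cylOf_eq_preimage]; exact measurable_qF d η J (measurableSet_singleton _)

lemma qF_preimage_eq_cylOf {J : Finset (Fin K)} {s : IdxT d J} {y : Pt d}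
    (hy : y ∈ qF d η J ⁻¹' {s}) : qF d η J ⁻¹' {s} = cylOf d η J y := by
  rw [cylOf_eq_preimage]
  have : qF d η J y = s := hy
  rw [this]

lemma projOn_preimage_cellOn (J : Finset (Fin K)) (x : Pt d) :
    projOn d J ⁻¹' cellOn d η J (projOn d J x) = cylOf d η J x := by
  ext y
  simp only [Set.mem_preimage, cellOn, cylOf, Set.mem_setOf_eq, projOn]
  constructor
  · intro hy j hj i; exact hy ⟨j, hj⟩ i
  · intro hy j i; exact hy j.1 j.2 i

variable (μ : Measure (Pt d))

/-- The inner kernel appearing in `kerBA`. -/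
noncomputable def fK (k : Fin K) (z : PtOn d ({k} : Finset (Fin K))) :
    Measure (PtOn d ({k} : Finset (Fin K))) :=
  condOn (μ.map (projOn d ({k} : Finset (Fin K)))) (cellOn d η ({k} : Finset (Fin K)) z)
    (midPtOn d η ({k} : Finset (Fin K)) z)

lemma kerBA_eq_bind (k : Fin K) (xp : PtOn d (pa k)) :
    kerBA d pa η μ k xp
      = ((condOn μ (projOn d (pa k) ⁻¹' cellOn d η (pa k) xp) (extendPt d pa η k xp)).map
          (projOn d ({k} : Finset (Fin K)))).bind (fK d η μ k) := rfl

noncomputable def smallF (k : Fin K) (a : IdxT d ({k} : Finset (Fin K))) :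
    Measure (PtOn d ({k} : Finset (Fin K))) :=
  condOn (μ.map (projOn d ({k} : Finset (Fin K))))
    {v | ∀ j i, cIdx η (v j i) = a j i} (fun j i => mkMid η (a j i))

lemma fK_eq_smallF (k : Fin K) (z : PtOn d ({k} : Finset (Fin K))) :
    fK d η μ k z = smallF d η μ k (idxOn d η ({k} : Finset (Fin K)) z) := by
  have hs : cellOn d η ({k} : Finset (Fin K)) z
      = {v | ∀ j i, cIdx η (v j i) = idxOn d η ({k} : Finset (Fin K)) z j i} := rfl
  have hm : midPtOn d η ({k} : Finset (Fin K)) z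
      = fun j i => mkMid η (idxOn d η ({k} : Finset (Fin K)) z j i) := by
    funext j i; exact cMid_eq_mkMid η (z j i)
  rw [fK, smallF, hs, hm]

lemma measurable_fK (k : Fin K) : Measurable (fK d η μ k) := by
  have h : fK d η μ k = smallF d η μ k ∘ idxOn d η ({k} : Finset (Fin K)) :=
    funext (fK_eq_smallF d η μ k)
  rw [h]
  exact (measurable_of_countable _).comp (measurable_idxOn d η _)

lemma fK_isProb [IsProbabilityMeasure μ] (k : Fin K) (z : PtOn d ({k} : Finset (Fin K))) :
    IsProbabilityMeasure (fK d η μ k z) := by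
  haveI : IsProbabilityMeasure (μ.map (projOn d ({k} : Finset (Fin K)))) :=
    Measure.isProbabilityMeasure_map (measurable_projOn d _).aemeasurable
  exact condOn_isProb _ _ _

lemma fK_apply_cell [IsProbabilityMeasure μ] (k : Fin K)
    (z z' : PtOn d ({k} : Finset (Fin K))) :
    fK d η μ k z' (cellOn d η ({k} : Finset (Fin K)) z)
      = (cellOn d η ({k} : Finset (Fin K)) z).indicator 1 z' := by
  classical
  haveI : IsProbabilityMeasure (μ.map (projOn d ({k} : Finset (Fin K)))) :=
    Measure.isProbabilityMeasure_map (measurable_projOn d _).aemeasurable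
  set m := μ.map (projOn d ({k} : Finset (Fin K))) with hm
  by_cases hz : z' ∈ cellOn d η ({k} : Finset (Fin K)) z
  · have hcell : cellOn d η ({k} : Finset (Fin K)) z' = cellOn d η ({k} : Finset (Fin K)) z := by
      ext v
      simp only [cellOn, Set.mem_setOf_eq]
      exact forall₂_congr fun j i => by rw [hz j i]
    rw [Set.indicator_of_mem hz, Pi.one_apply]
    by_cases h0 : m (cellOn d η ({k} : Finset (Fin K)) z') = 0
    · rw [fK, ← hm, condOn_apply_of_eq _ _ h0 (measurableSet_cellOn d η _ z)]
      have hmid : midPtOn d η ({k} : Finset (Fin K)) z' ∈ cellOn d η ({k} : Finset (Fin K)) z := by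
        rw [← hcell]; intro j i; exact cIdx_cMid η (z' j i)
      rw [Set.indicator_of_mem hmid, Pi.one_apply]
    · rw [fK, ← hm, condOn_apply_of_ne _ _ h0 (measurableSet_cellOn d η _ z), hcell,
        Set.inter_self]
      rw [hcell] at h0
      exact ENNReal.div_self h0 (measure_ne_top m _)
  · rw [Set.indicator_of_notMem hz]
    have hne : ∃ j i, cIdx η (z' j i) ≠ cIdx η (z j i) := by
      by_contra hc
      push_neg at hc
      exact hz fun j i => hc j i
    obtain ⟨j0, i0, hji⟩ := hne
    have hdisj : cellOn d η ({k} : Finset (Fin K)) z ∩ cellOn d η ({k} : Finset (Fin K)) z' = ∅ := by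
      ext v
      simp only [Set.mem_inter_iff, Set.mem_empty_iff_false, iff_false, not_and]
      intro hv hv'
      exact hji ((hv' j0 i0).symm.trans (hv j0 i0))
    by_cases h0 : m (cellOn d η ({k} : Finset (Fin K)) z') = 0
    · rw [fK, ← hm, condOn_apply_of_eq _ _ h0 (measurableSet_cellOn d η _ z)]
      have hmid : midPtOn d η ({k} : Finset (Fin K)) z' ∉ cellOn d η ({k} : Finset (Fin K)) z := by
        intro hc
        exact hji (((cIdx_cMid η (z' j0 i0)).symm).trans (hc j0 i0))
      rw [Set.indicator_of_notMem hmid]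
    · rw [fK, ← hm, condOn_apply_of_ne _ _ h0 (measurableSet_cellOn d η _ z), hdisj,
        measure_empty, ENNReal.zero_div]

/-- Part 1 of Statement 9 (valid for every node). -/
lemma kerBA_apply_cell [IsProbabilityMeasure μ] (k : Fin K) (xp : PtOn d (pa k))
    (z : PtOn d ({k} : Finset (Fin K))) :
    kerBA d pa η μ k xp (cellOn d η ({k} : Finset (Fin K)) z)
      = ((condOn μ (projOn d (pa k) ⁻¹' cellOn d η (pa k) xp) (extendPt d pa η k xp)).map
          (projOn d ({k} : Finset (Fin K)))) (cellOn d η ({k} : Finset (Fin K)) z) := by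
  rw [kerBA_eq_bind, Measure.bind_apply (measurableSet_cellOn d η _ z) (measurable_fK d η μ k).aemeasurable]
  rw [lintegral_congr (fun z' => fK_apply_cell d η μ k z z')]
  exact lintegral_indicator_one (measurableSet_cellOn d η _ z)

lemma kerBA_isProb [IsProbabilityMeasure μ] (k : Fin K) (xp : PtOn d (pa k)) :
    IsProbabilityMeasure (kerBA d pa η μ k xp) := by
  constructor
  rw [kerBA_eq_bind, Measure.bind_apply MeasurableSet.univ (measurable_fK d η μ k).aemeasurable]
  rw [lintegral_congr (fun z' => (fK_isProb d η μ k z').measure_univ)]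
  haveI : IsProbabilityMeasure
      (condOn μ (projOn d (pa k) ⁻¹' cellOn d η (pa k) xp) (extendPt d pa η k xp)) :=
    condOn_isProb μ _ _
  haveI : IsProbabilityMeasure
      ((condOn μ (projOn d (pa k) ⁻¹' cellOn d η (pa k) xp) (extendPt d pa η k xp)).map
        (projOn d ({k} : Finset (Fin K)))) :=
    Measure.isProbabilityMeasure_map (measurable_projOn d _).aemeasurable
  simp

noncomputable def bigF (k : Fin K) (a : IdxT d (pa k)) :
    Measure (PtOn d ({k} : Finset (Fin K))) :=
  ((condOn μ {y : Pt d | ∀ (j : (pa k : Finset (Fin K))) i, cIdx η (y j.1 i) = a j i}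
    (fun j => if h : j ∈ pa k then fun i => mkMid η (a ⟨j, h⟩ i) else fun _ => half)).map
    (projOn d ({k} : Finset (Fin K)))).bind (fK d η μ k)

lemma kerBA_eq_bigF (k : Fin K) (xp : PtOn d (pa k)) :
    kerBA d pa η μ k xp = bigF d pa η μ k (idxOn d η (pa k) xp) := by
  rw [kerBA_eq_bind, bigF]
  have hS : projOn d (pa k) ⁻¹' cellOn d η (pa k) xp
      = {y : Pt d | ∀ (j : (pa k : Finset (Fin K))) i,
          cIdx η (y j.1 i) = idxOn d η (pa k) xp j i} := rfl
  have he : extendPt d pa η k xp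
      = fun j => if h : j ∈ pa k then fun i => mkMid η (idxOn d η (pa k) xp ⟨j, h⟩ i)
          else fun _ => half := by
    funext j
    by_cases h : j ∈ pa k
    · rw [extendPt, dif_pos h, dif_pos h]
      funext i
      exact cMid_eq_mkMid η (xp ⟨j, h⟩ i)
    · rw [extendPt, dif_neg h, dif_neg h]
  rw [hS, he]

lemma measurable_kerBA (k : Fin K) : Measurable (kerBA d pa η μ k) := by
  have h : kerBA d pa η μ k = bigF d pa η μ k ∘ idxOn d η (pa k) :=
    funext (kerBA_eq_bigF d pa η μ k)
  rw [h]
  exact (measurable_of_countable _).comp (measurable_idxOn d η _)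

lemma measurable_updFun (y : Pt d) (k : Fin K) :
    Measurable fun v : PtOn d ({k} : Finset (Fin K)) =>
      Function.update y k (v ⟨k, Finset.mem_singleton_self k⟩) := by
  apply measurable_pi_lambda
  intro j
  by_cases hj : j = k
  · subst hj
    simp only [Function.update_self]
    exact measurable_pi_apply _
  · simp only [Function.update_of_ne hj]
    exact measurable_const

lemma measurable_uncurry_update (k : Fin K) :
    Measurable (Function.uncurry fun (y : Pt d) (v : PtOn d ({k} : Finset (Fin K))) =>
      Function.update y k (v ⟨k, Finset.mem_singleton_self k⟩)) := by
  apply measurable_pi_lambda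
  intro j
  by_cases hj : j = k
  · subst hj
    simp only [Function.uncurry, Function.update_self]
    exact (measurable_pi_apply _).comp measurable_snd
  · simp only [Function.uncurry, Function.update_of_ne hj]
    exact (measurable_pi_apply j).comp measurable_fst

lemma chainM_succ_apply [IsProbabilityMeasure μ] (n : ℕ) (h : n < K) {B : Set (Pt d)}
    (hB : MeasurableSet B) :
    chainM d pa (kerBA d pa η μ) (n + 1) B
      = ∫⁻ y, kerBA d pa η μ ⟨n, h⟩ (projOn d (pa ⟨n, h⟩) y)
          ((fun v : PtOn d ({(⟨n, h⟩ : Fin K)} : Finset (Fin K)) =>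
            Function.update y ⟨n, h⟩ (v ⟨⟨n, h⟩, Finset.mem_singleton_self _⟩)) ⁻¹' B)
          ∂(chainM d pa (kerBA d pa η μ) n) := by
  have hmeas : Measurable fun y : Pt d =>
      (kerBA d pa η μ ⟨n, h⟩ (projOn d (pa ⟨n, h⟩) y)).map
        (fun v : PtOn d ({(⟨n, h⟩ : Fin K)} : Finset (Fin K)) =>
          Function.update y ⟨n, h⟩ (v ⟨⟨n, h⟩, Finset.mem_singleton_self _⟩)) := by
    exact measurable_map_param _
      ((measurable_kerBA d pa η μ ⟨n, h⟩).comp (measurable_projOn d _))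
      (fun y => kerBA_isProb d pa η μ _ _) _ (measurable_uncurry_update d _)
  rw [chainM, dif_pos h, Measure.bind_apply hB hmeas.aemeasurable]
  refine lintegral_congr fun y => ?_
  rw [Measure.map_apply (measurable_updFun d y ⟨n, h⟩) hB]

lemma chainM_succ_of_not_mem [IsProbabilityMeasure μ] (n : ℕ) (h : n < K)
    (J : Finset (Fin K)) (hn : (⟨n, h⟩ : Fin K) ∉ J) (x : Pt d) :
    chainM d pa (kerBA d pa η μ) (n + 1) (cylOf d η J x)
      = chainM d pa (kerBA d pa η μ) n (cylOf d η J x) := by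
  rw [chainM_succ_apply d pa η μ n h (measurableSet_cylOf d η J x)]
  have hpt : ∀ y : Pt d,
      kerBA d pa η μ ⟨n, h⟩ (projOn d (pa ⟨n, h⟩) y)
        ((fun v : PtOn d ({(⟨n, h⟩ : Fin K)} : Finset (Fin K)) =>
          Function.update y ⟨n, h⟩ (v ⟨⟨n, h⟩, Finset.mem_singleton_self _⟩)) ⁻¹' cylOf d η J x)
      = (cylOf d η J x).indicator 1 y := by
    intro y
    by_cases hy : y ∈ cylOf d η J x
    · have hpre : (fun v : PtOn d ({(⟨n, h⟩ : Fin K)} : Finset (Fin K)) =>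
          Function.update y ⟨n, h⟩ (v ⟨⟨n, h⟩, Finset.mem_singleton_self _⟩)) ⁻¹' cylOf d η J x
          = Set.univ := by
        refine Set.eq_univ_of_forall fun v => ?_
        intro j hj i
        have hjne : j ≠ ⟨n, h⟩ := fun hc => hn (hc ▸ hj)
        beta_reduce
        rw [Function.update_of_ne hjne]
        exact hy j hj i
      rw [hpre]
      haveI := kerBA_isProb d pa η μ ⟨n, h⟩ (projOn d (pa ⟨n, h⟩) y)
      rw [measure_univ, Set.indicator_of_mem hy, Pi.one_apply]
    · have hpre : (fun v : PtOn d ({(⟨n, h⟩ : Fin K)} : Finset (Fin K)) =>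
          Function.update y ⟨n, h⟩ (v ⟨⟨n, h⟩, Finset.mem_singleton_self _⟩)) ⁻¹' cylOf d η J x
          = ∅ := by
        refine Set.eq_empty_iff_forall_notMem.mpr fun v hv => hy ?_
        intro j hj i
        have hjne : j ≠ ⟨n, h⟩ := fun hc => hn (hc ▸ hj)
        have := hv j hj i
        beta_reduce at this
        rwa [Function.update_of_ne hjne] at this
      rw [hpre, measure_empty, Set.indicator_of_notMem hy]
  rw [lintegral_congr hpt]
  exact lintegral_indicator_one (measurableSet_cylOf d η J x)

lemma chainM_succ_of_mem [IsProbabilityMeasure μ] (hs : SortedGraph pa) (hnc : NoColliders pa)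
    (n : ℕ) (h : n < K) (J : Finset (Fin K)) (hJ : FullConn pa J)
    (hJb : ∀ j ∈ J, j.1 < n + 1) (hmem : (⟨n, h⟩ : Fin K) ∈ J) (x : Pt d)
    (IH : ∀ J' : Finset (Fin K), FullConn pa J' → (∀ j ∈ J', j.1 < n) → ∀ x' : Pt d,
      chainM d pa (kerBA d pa η μ) n (cylOf d η J' x') = μ (cylOf d η J' x')) :
    chainM d pa (kerBA d pa η μ) (n + 1) (cylOf d η J x) = μ (cylOf d η J x) := by
  classical
  rw [chainM_succ_apply d pa η μ n h (measurableSet_cylOf d η J x)]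
  set kn : Fin K := ⟨n, h⟩ with hkndef
  have hsub : ∀ j ∈ J.erase kn, j ∈ pa kn := by
    intro j hj
    have hjJ : j ∈ J := Finset.mem_of_mem_erase hj
    have hjne : j ≠ kn := Finset.ne_of_mem_erase hj
    have hlt : j < kn := by
      have h1 := hJb j hjJ
      have h3 : j.1 ≠ n := fun hc => hjne (Fin.ext (by rw [hkndef]; exact hc))
      rw [hkndef, Fin.lt_def]
      exact (by omega : j.1 < n)
    exact hJ j hjJ kn hmem hlt
  have hknpa : kn ∉ pa kn := fun hc => lt_irrefl kn (hs kn kn hc)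
  set hf : IdxT d (pa kn) → ℝ≥0∞ := fun s =>
    (if ∀ j (hj : j ∈ J.erase kn) (i : Fin (d j)), s ⟨j, hsub j hj⟩ i = cIdx η (x j i)
      then 1 else 0) *
    (if μ (qF d η (pa kn) ⁻¹' {s}) = 0
      then (if ∀ i : Fin (d kn), cIdx η half = cIdx η (x kn i) then 1 else 0)
      else μ (cylOf d η ({kn} : Finset (Fin K)) x ∩ qF d η (pa kn) ⁻¹' {s})
        / μ (qF d η (pa kn) ⁻¹' {s})) with hfdef
  -- pointwise identification of the integrand
  have hpt : ∀ y : Pt d,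
      kerBA d pa η μ kn (projOn d (pa kn) y)
        ((fun v : PtOn d ({kn} : Finset (Fin K)) =>
          Function.update y kn (v ⟨kn, Finset.mem_singleton_self _⟩)) ⁻¹' cylOf d η J x)
      = hf (qF d η (pa kn) y) := by
    intro y
    simp only [hfdef]
    by_cases hy : y ∈ cylOf d η (J.erase kn) x
    · have hpre : (fun v : PtOn d ({kn} : Finset (Fin K)) =>
          Function.update y kn (v ⟨kn, Finset.mem_singleton_self _⟩)) ⁻¹' cylOf d η J x
          = cellOn d η ({kn} : Finset (Fin K)) (projOn d ({kn} : Finset (Fin K)) x) := by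
        ext v
        constructor
        · intro hv j i
          obtain ⟨j, hjmem⟩ := j
          have hj1 : j = kn := Finset.mem_singleton.mp hjmem
          subst hj1
          have h2 := hv kn hmem i
          beta_reduce at h2
          rw [Function.update_self] at h2
          exact h2
        · intro hv j hj i
          by_cases hjk : j = kn
          · subst hjk
            beta_reduce
            rw [Function.update_self]
            exact hv ⟨kn, Finset.mem_singleton_self kn⟩ i
          · beta_reduce
            rw [Function.update_of_ne hjk]
            exact hy j (Finset.mem_erase.mpr ⟨hjk, hj⟩) i
      rw [hpre, kerBA_apply_cell d pa η μ kn (projOn d (pa kn) y)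
          (projOn d ({kn} : Finset (Fin K)) x),
        Measure.map_apply (measurable_projOn d _) (measurableSet_cellOn d η _ _),
        projOn_preimage_cellOn d η ({kn} : Finset (Fin K)) x,
        projOn_preimage_cellOn d η (pa kn) y,
        cylOf_eq_preimage d η (pa kn) y]
      have hcomp : ∀ j (hj : j ∈ J.erase kn) (i : Fin (d j)),
          qF d η (pa kn) y ⟨j, hsub j hj⟩ i = cIdx η (x j i) :=
        fun j hj i => hy j hj i
      rw [if_pos hcomp, one_mul]
      by_cases h0 : μ (qF d η (pa kn) ⁻¹' {qF d η (pa kn) y}) = 0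
      · rw [condOn_apply_of_eq μ _ h0 (measurableSet_cylOf d η _ x), if_pos h0]
        have hext : ∀ i : Fin (d kn),
            extendPt d pa η kn (projOn d (pa kn) y) kn i = half := by
          intro i
          simp only [extendPt, dif_neg hknpa]
        by_cases hh : ∀ i : Fin (d kn), cIdx η half = cIdx η (x kn i)
        · rw [if_pos hh]
          have hm : extendPt d pa η kn (projOn d (pa kn) y)
              ∈ cylOf d η ({kn} : Finset (Fin K)) x := by
            intro j hj i
            have hj1 : j = kn := Finset.mem_singleton.mp hj
            subst hj1
            rw [hext i]
            exact hh i
          rw [Set.indicator_of_mem hm, Pi.one_apply]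
        · rw [if_neg hh]
          have hm : extendPt d pa η kn (projOn d (pa kn) y)
              ∉ cylOf d η ({kn} : Finset (Fin K)) x := by
            intro hc
            apply hh
            intro i
            have := hc kn (Finset.mem_singleton_self kn) i
            rwa [hext i] at this
          rw [Set.indicator_of_notMem hm]
      · rw [condOn_apply_of_ne μ _ h0 (measurableSet_cylOf d η _ x), if_neg h0]
    · have hpre : (fun v : PtOn d ({kn} : Finset (Fin K)) =>
          Function.update y kn (v ⟨kn, Finset.mem_singleton_self _⟩)) ⁻¹' cylOf d η J x
          = ∅ := by
        refine Set.eq_empty_iff_forall_notMem.mpr fun v hv => hy ?_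
        intro j hj i
        have hjne : j ≠ kn := Finset.ne_of_mem_erase hj
        have h2 := hv j (Finset.mem_of_mem_erase hj) i
        beta_reduce at h2
        rwa [Function.update_of_ne hjne] at h2
      rw [hpre, measure_empty]
      have hncomp : ¬ (∀ j (hj : j ∈ J.erase kn) (i : Fin (d j)),
          qF d η (pa kn) y ⟨j, hsub j hj⟩ i = cIdx η (x j i)) :=
        fun hc => hy fun j hj i => hc j hj i
      rw [if_neg hncomp, zero_mul]
  rw [lintegral_congr hpt,
    ← lintegral_map (measurable_of_countable hf) (measurable_qF d η (pa kn)),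
    lintegral_countable']
  -- identify the pushforward masses with those of μ
  have hmap : ∀ s : IdxT d (pa kn),
      (chainM d pa (kerBA d pa η μ) n).map (qF d η (pa kn)) {s}
        = μ (qF d η (pa kn) ⁻¹' {s}) := by
    intro s
    rw [Measure.map_apply (measurable_qF d η (pa kn)) (measurableSet_singleton s)]
    rcases Set.eq_empty_or_nonempty (qF d η (pa kn) ⁻¹' {s}) with he | ⟨y₀, hy₀⟩
    · rw [he, measure_empty, measure_empty]
    · rw [qF_preimage_eq_cylOf d η hy₀]
      exact IH (pa kn) (hnc kn) (fun j hj => hs kn j hj) y₀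
  -- termwise identity on the μ side
  have hterm : ∀ s : IdxT d (pa kn),
      μ (cylOf d η J x ∩ qF d η (pa kn) ⁻¹' {s}) = hf s * μ (qF d η (pa kn) ⁻¹' {s}) := by
    intro s
    simp only [hfdef]
    by_cases hcs : ∀ j (hj : j ∈ J.erase kn) (i : Fin (d j)),
        s ⟨j, hsub j hj⟩ i = cIdx η (x j i)
    · rw [if_pos hcs, one_mul]
      by_cases h0 : μ (qF d η (pa kn) ⁻¹' {s}) = 0
      · rw [if_pos h0, h0, mul_zero]
        exact measure_mono_null Set.inter_subset_right h0
      · rw [if_neg h0]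
        have hBq : cylOf d η J x ∩ qF d η (pa kn) ⁻¹' {s}
            = cylOf d η ({kn} : Finset (Fin K)) x ∩ qF d η (pa kn) ⁻¹' {s} := by
          ext y
          simp only [Set.mem_inter_iff]
          constructor
          · rintro ⟨hyB, hyq⟩
            refine ⟨?_, hyq⟩
            intro j hj i
            have hj1 : j = kn := Finset.mem_singleton.mp hj
            subst hj1
            exact hyB kn hmem i
          · rintro ⟨hyC, hyq⟩
            refine ⟨?_, hyq⟩
            intro j hj i
            by_cases hjk : j = kn
            · subst hjk
              exact hyC kn (Finset.mem_singleton_self kn) i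
            · have hjm : j ∈ J.erase kn := Finset.mem_erase.mpr ⟨hjk, hj⟩
              have hqy : qF d η (pa kn) y = s := hyq
              calc cIdx η (y j i)
                  = qF d η (pa kn) y ⟨j, hsub j hjm⟩ i := rfl
                _ = s ⟨j, hsub j hjm⟩ i := by rw [hqy]
                _ = cIdx η (x j i) := hcs j hjm i
        rw [hBq, ENNReal.div_mul_cancel h0 (measure_ne_top μ _)]
    · rw [if_neg hcs, zero_mul]
      have hemp : cylOf d η J x ∩ qF d η (pa kn) ⁻¹' {s} = ∅ := by
        refine Set.eq_empty_iff_forall_notMem.mpr ?_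
        rintro y ⟨hyB, hyq⟩
        refine hcs fun j hj i => ?_
        have hqy : qF d η (pa kn) y = s := hyq
        rw [← hqy]
        exact hyB j (Finset.mem_of_mem_erase hj) i
      rw [hemp, measure_empty, zero_mul]
  have hmeasInter : ∀ s : IdxT d (pa kn),
      MeasurableSet (cylOf d η J x ∩ qF d η (pa kn) ⁻¹' {s}) := fun s =>
    (measurableSet_cylOf d η J x).inter (measurable_qF d η (pa kn) (measurableSet_singleton s))
  have hdisj : Pairwise (Function.onFun Disjoint fun s : IdxT d (pa kn) =>
      cylOf d η J x ∩ qF d η (pa kn) ⁻¹' {s}) := by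
    intro s s' hss
    refine Set.disjoint_left.mpr ?_
    rintro y ⟨_, hy1⟩ ⟨_, hy2⟩
    have h1 : qF d η (pa kn) y = s := hy1
    have h2 : qF d η (pa kn) y = s' := hy2
    exact hss (h1.symm.trans h2)
  have hU : (⋃ s : IdxT d (pa kn), cylOf d η J x ∩ qF d η (pa kn) ⁻¹' {s})
      = cylOf d η J x := by
    ext y
    simp only [Set.mem_iUnion, Set.mem_inter_iff, Set.mem_preimage, Set.mem_singleton_iff]
    constructor
    · rintro ⟨s, hy, _⟩
      exact hy
    · intro hy
      exact ⟨qF d η (pa kn) y, hy, rfl⟩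
  have hpart : μ (cylOf d η J x)
      = ∑' s : IdxT d (pa kn), μ (cylOf d η J x ∩ qF d η (pa kn) ⁻¹' {s}) := by
    conv_lhs => rw [← hU]
    exact measure_iUnion hdisj hmeasInter
  have hfinal : ∀ s : IdxT d (pa kn),
      hf s * (chainM d pa (kerBA d pa η μ) n).map (qF d η (pa kn)) {s}
        = μ (cylOf d η J x ∩ qF d η (pa kn) ⁻¹' {s}) := fun s => by
    rw [hmap s, ← hterm s]
  exact (tsum_congr hfinal).trans hpart.symm

lemma chainM_cyl [IsProbabilityMeasure μ] (hs : SortedGraph pa) (hnc : NoColliders pa)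
    (n : ℕ) : n ≤ K → ∀ J : Finset (Fin K), FullConn pa J → (∀ j ∈ J, j.1 < n) →
    ∀ x : Pt d, chainM d pa (kerBA d pa η μ) n (cylOf d η J x) = μ (cylOf d η J x) := by
  induction n with
  | zero =>
    intro _ J _ hJb x
    have hJe : cylOf d η J x = Set.univ :=
      Set.eq_univ_of_forall fun y j hj i => absurd (hJb j hj) (Nat.not_lt_zero _)
    rw [hJe, chainM]
    simp
  | succ n ih =>
    intro hn J hJ hJb x
    have h : n < K := Nat.lt_of_lt_of_le (Nat.lt_succ_self n) hn
    by_cases hmem : (⟨n, h⟩ : Fin K) ∈ J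
    · exact chainM_succ_of_mem d pa η μ hs hnc n h J hJ hJb hmem x
        (ih (Nat.le_of_succ_le hn))
    · rw [chainM_succ_of_not_mem d pa η μ n h J hmem x]
      refine ih (Nat.le_of_succ_le hn) J hJ ?_ x
      intro j hj
      have h1 := hJb j hj
      have h2 : j ≠ ⟨n, h⟩ := fun hc => hmem (hc ▸ hj)
      have h3 : j.1 ≠ n := fun hc => h2 (Fin.ext hc)
      omega

end Stmt9Aux

/-- Lemma: `μ^{bA}` is well defined.
For `2 ≤ k ≤ K` and cells `c_pa(k)`, `c_k`, one has
`μ^{bA}(c_k | c_pa(k)) = μ(c_k | c_pa(k))`; in particular, if `G` has no colliders, then for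
every fully connected `I` and every cell `c_I` one has `μ^{bA}(c_I) = μ(c_I)`. -/
theorem stmt9 {K : ℕ} (d : Fin K → ℕ) (pa : Fin K → Finset (Fin K)) (η : ℕ)
    (μ : Measure (Pt d)) (hμ : IsProbabilityMeasure μ) :
    (∀ k : Fin K, 1 ≤ k.1 → ∀ (xp : PtOn d (pa k)) (z : PtOn d ({k} : Finset (Fin K))),
      kerBA d pa η μ k xp (cellOn d η {k} z)
        = ((condOn μ (projOn d (pa k) ⁻¹' cellOn d η (pa k) xp) (extendPt d pa η k xp)).map
            (projOn d ({k} : Finset (Fin K)))) (cellOn d η {k} z)) ∧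
    (SortedGraph pa → NoColliders pa →
      ∀ I : Finset (Fin K), FullConn pa I → ∀ x : Pt d,
        opBA d pa η μ (cylOf d η I x) = μ (cylOf d η I x)) := by
  haveI := hμ
  constructor
  · intro k _ xp z
    exact kerBA_apply_cell d pa η μ k xp z
  · intro hs hnc I hI x
    have hop : opBA d pa η μ = chainM d pa (kerBA d pa η μ) K := rfl
    rw [hop]
    exact chainM_cyl d pa η μ hs hnc K le_rfl I hI (fun j _ => j.isLt) x
end
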